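/- Let R > 0, α ∈ ℝ, y_1,…,y_m ∈ ℝ², and let 𝒩 and Φ̂ be the particle counting function and normalized flux. Let R/2 ≤ r₁ < r₂, let q ∈ ℤ, and suppose ρ(r) = |Φ̂(r) − 2q|² for all r ∈ (r₁, r₂) with ρ(r₀) = 0 for some r₀ ∈ (r₁, r₂). Then, with δ(r) := min{r − r₁, r₂ − r} and 𝒩'(r) := Σ_l f(|y_l|, r) the a.e. derivative of 𝒩: ∫_{r₁}^{r₂} ρ(r) r^{-1} dr ≥ (2α² / (r₂ (r₂ − r₁))) · ( ∫_{r₁}^{r₂} 𝒩'(r) δ(r) dr )². (General integral bound, Lemma 4.8.) -/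

import Mathlib

open MeasureTheory Real Set

noncomputable section

/-- The plane `ℝ²`. -/
abbrev Plane : Type := EuclideanSpace ℝ (Fin 2)

/-- The particle counting function `𝒩(r) = Σ_l |B_r(0) ∩ B_R(y_l)| / (πR²)`. -/
def countN (R : ℝ) {m : ℕ} (y : Fin m → Plane) (r : ℝ) : ℝ :=
  ∑ l : Fin m, (volume (Metric.ball (0 : Plane) r ∩ Metric.ball (y l) R)).toReal / (π * R ^ 2)

/-- The effective coupling `ρ(r) = min_{q ∈ ℤ} |Φ̂(r) - 2q|²` for the normalized flux
`Φ̂(r) = α(1 + 2𝒩(r))`. -/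
def rhoFun (α R : ℝ) {m : ℕ} (y : Fin m → Plane) (r : ℝ) : ℝ :=
  sInf {t : ℝ | ∃ q : ℤ, t = (α * (1 + 2 * countN R y r) - 2 * q) ^ 2}

/-- The one-particle profile `f(d,r)`: `2r/R²` for `r ≤ R - d`; `0` for `r > R + d` or
`r < d - R`; and `(2r/(πR²)) arccos((d²+r²-R²)/(2dr))` otherwise, so that
`𝒩'(r) = Σ_l f(|y_l|, r)` is the a.e. derivative of `𝒩`. -/
def profile (R d r : ℝ) : ℝ :=
  if r ≤ R - d then 2 * r / R ^ 2
  else if R + d < r ∨ r < d - R then 0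
  else 2 * r / (π * R ^ 2) * Real.arccos ((d ^ 2 + r ^ 2 - R ^ 2) / (2 * d * r))

/-- `𝒩'(r) = Σ_l f(|y_l|, r)`. -/
def countN' (R : ℝ) {m : ℕ} (y : Fin m → Plane) (r : ℝ) : ℝ :=
  ∑ l : Fin m, profile R ‖y l‖ r

lemma profile_abs_le {R : ℝ} (hR : 0 < R) (d t : ℝ) : |profile R d t| ≤ 2 * |t| / R ^ 2 := by
  unfold profile
  split_ifs with h1 h2
  · rw [abs_div, abs_of_pos (by positivity : (0:ℝ) < R ^ 2), abs_mul, abs_two]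
  · simp only [abs_zero]; positivity
  · have ha1 := Real.arccos_nonneg ((d ^ 2 + t ^ 2 - R ^ 2) / (2 * d * t))
    have ha2 := Real.arccos_le_pi ((d ^ 2 + t ^ 2 - R ^ 2) / (2 * d * t))
    have hπ : (0:ℝ) < π := Real.pi_pos
    have key : 2 * |t| / (π * R ^ 2) * π = 2 * |t| / R ^ 2 := by
      field_simp
    calc |2 * t / (π * R ^ 2) * Real.arccos ((d ^ 2 + t ^ 2 - R ^ 2) / (2 * d * t))|
        = 2 * |t| / (π * R ^ 2) * Real.arccos ((d ^ 2 + t ^ 2 - R ^ 2) / (2 * d * t)) := by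
          rw [abs_mul, abs_of_nonneg ha1, abs_div, abs_of_pos (by positivity : (0:ℝ) < π * R ^ 2),
            abs_mul, abs_two]
      _ ≤ 2 * |t| / (π * R ^ 2) * π := by gcongr
      _ = 2 * |t| / R ^ 2 := key

lemma profile_nonneg {R : ℝ} (hR : 0 < R) (d : ℝ) {t : ℝ} (ht : 0 ≤ t) :
    0 ≤ profile R d t := by
  unfold profile
  split_ifs with h1 h2
  · positivity
  · exact le_rfl
  · exact mul_nonneg (by positivity) (Real.arccos_nonneg _)

lemma profile_measurable (R d : ℝ) : Measurable (profile R d) := by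
  unfold profile
  refine Measurable.ite (measurableSet_le measurable_id measurable_const) (by fun_prop) ?_
  refine Measurable.ite ?_ measurable_const ?_
  · exact (measurableSet_lt measurable_const measurable_id).union
      (measurableSet_lt measurable_id measurable_const)
  · exact Measurable.mul (by fun_prop)
      (Real.continuous_arccos.measurable.comp (by fun_prop))

lemma profile_intervalIntegrable {R : ℝ} (hR : 0 < R) (d a b : ℝ) :
    IntervalIntegrable (profile R d) volume a b := by
  have hc : Continuous fun t : ℝ => 2 * |t| / R ^ 2 := by continuity
  refine (hc.intervalIntegrable a b).mono_fun
    (profile_measurable R d).aestronglyMeasurable ?_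
  filter_upwards with t
  rw [Real.norm_eq_abs, Real.norm_eq_abs]
  exact (profile_abs_le hR d t).trans (le_abs_self _)



lemma cosSet_eq (c : ℝ) :
    {θ : ℝ | θ ∈ Ioo (-π) π ∧ c < Real.cos θ} = Ioo (-Real.arccos c) (Real.arccos c) := by
  ext θ
  simp only [mem_setOf_eq, mem_Ioo, ← abs_lt]
  constructor
  · rintro ⟨hθ, hc⟩
    rcases le_or_gt c (-1) with h | h
    · rw [Real.arccos_of_le_neg_one h]; exact hθ
    · by_contra hge
      push_neg at hge
      have h1 : c ≤ 1 := le_of_lt (lt_of_lt_of_le hc (Real.cos_le_one θ))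
      have h2 := Real.cos_le_cos_of_nonneg_of_le_pi (Real.arccos_nonneg c) hθ.le hge
      rw [Real.cos_abs, Real.cos_arccos h.le h1] at h2
      linarith
  · intro hθ
    have hπ : |θ| < π := lt_of_lt_of_le hθ (Real.arccos_le_pi c)
    refine ⟨hπ, ?_⟩
    rcases le_or_gt c (-1) with h | h
    · have : Real.cos π < Real.cos |θ| :=
        Real.cos_lt_cos_of_nonneg_of_le_pi (abs_nonneg θ) le_rfl hπ
      rw [Real.cos_pi, Real.cos_abs] at this
      linarith
    · rcases le_or_gt c 1 with h1 | h1
      · have h2 : Real.cos (Real.arccos c) < Real.cos |θ| :=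
          Real.cos_lt_cos_of_nonneg_of_le_pi (abs_nonneg θ) (Real.arccos_le_pi c) hθ
        rw [Real.cos_arccos h.le h1, Real.cos_abs] at h2
        exact h2
      · exfalso
        rw [Real.arccos_of_one_le h1.le] at hθ
        exact absurd hθ (not_lt.mpr (abs_nonneg θ))

lemma mem_inter_symm {R r d t : ℝ} (hR : 0 < R) (hd : 0 < d) (ht : 0 < t) (θ : ℝ) :
    Complex.polarCoord.symm (t, θ) ∈ Metric.ball (0:ℂ) r ∩ Metric.ball ((d:ℂ)) R
      ↔ t < r ∧ (d ^ 2 + t ^ 2 - R ^ 2) / (2 * d * t) < Real.cos θ := by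
  set z := Complex.polarCoord.symm (t, θ) with hz
  have habs : ‖z‖ = t := by
    rw [hz, Complex.norm_polarCoord_symm]; exact abs_of_pos ht
  have h1 : z ∈ Metric.ball (0:ℂ) r ↔ t < r := by
    rw [Metric.mem_ball, Complex.dist_eq, sub_zero, habs]
  have hsq : ‖z - (d:ℂ)‖ ^ 2 = t ^ 2 + d ^ 2 - 2 * t * d * Real.cos θ := by
    rw [Complex.sq_norm, Complex.normSq_apply]
    have hre : (z - (d:ℂ)).re = t * Real.cos θ - d := by
      simp [hz, Complex.polarCoord_symm_apply, ← Complex.ofReal_cos, ← Complex.ofReal_sin]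
    have him : (z - (d:ℂ)).im = t * Real.sin θ := by
      simp [hz, Complex.polarCoord_symm_apply, ← Complex.ofReal_cos, ← Complex.ofReal_sin]
    rw [hre, him]
    nlinarith [Real.sin_sq_add_cos_sq θ]
  have h2 : z ∈ Metric.ball ((d:ℂ)) R
      ↔ (d ^ 2 + t ^ 2 - R ^ 2) / (2 * d * t) < Real.cos θ := by
    rw [Metric.mem_ball, Complex.dist_eq]
    constructor
    · intro h
      have := pow_lt_pow_left₀ h (norm_nonneg _) two_ne_zero
      rw [hsq] at this
      rw [div_lt_iff₀ (by positivity)]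
      nlinarith
    · intro h
      have h3 : ‖z - (d:ℂ)‖ ^ 2 < R ^ 2 := by
        rw [hsq]
        rw [div_lt_iff₀ (by positivity)] at h
        nlinarith
      exact lt_of_pow_lt_pow_left₀ 2 hR.le h3
  rw [mem_inter_iff, h1, h2]

lemma profile_eval {R d t : ℝ} (hR : 0 < R) (hd : 0 < d) (ht : 0 < t) :
    t * (2 * Real.arccos ((d ^ 2 + t ^ 2 - R ^ 2) / (2 * d * t)))
      = π * R ^ 2 * profile R d t := by
  have hπ : (0:ℝ) < π := Real.pi_pos
  unfold profile
  split_ifs with h1 h2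
  · have hc : (d ^ 2 + t ^ 2 - R ^ 2) / (2 * d * t) ≤ -1 := by
      rw [div_le_iff₀ (by positivity)]
      nlinarith
    rw [Real.arccos_of_le_neg_one hc]
    field_simp
  · have hc : (1:ℝ) ≤ (d ^ 2 + t ^ 2 - R ^ 2) / (2 * d * t) := by
      rw [le_div_iff₀ (by positivity)]
      rcases h2 with h | h
      · nlinarith
      · nlinarith
    rw [Real.arccos_of_one_le hc]
    ring
  · field_simp


lemma vol_inter_complex_zero {R : ℝ} (hR : 0 < R) {r : ℝ} (hr : 0 ≤ r) :
    (volume (Metric.ball (0:ℂ) r ∩ Metric.ball ((0:ℝ):ℂ) R)).toReal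
      = ∫ t in (0:ℝ)..r, π * R ^ 2 * profile R 0 t := by
  have hπ : (0:ℝ) < π := Real.pi_pos
  have hball : Metric.ball (0:ℂ) r ∩ Metric.ball ((0:ℝ):ℂ) R = Metric.ball 0 (min r R) := by
    push_cast
    ext z
    simp [Metric.mem_ball, lt_min_iff]
  have hvol : (volume (Metric.ball (0:ℂ) r ∩ Metric.ball ((0:ℝ):ℂ) R)).toReal
      = π * min r R ^ 2 := by
    rw [hball, Complex.volume_ball]
    rw [ENNReal.toReal_mul, ENNReal.toReal_pow, ENNReal.toReal_ofReal (le_min hr hR.le)]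
    rw [ENNReal.coe_toReal, NNReal.coe_real_pi]
    ring
  rw [hvol]
  -- evaluate the integral
  have hprof : ∀ t : ℝ, π * R ^ 2 * profile R 0 t = if t ≤ R then 2 * π * t else 0 := by
    intro t
    unfold profile
    rcases le_or_gt t R with h | h
    · rw [if_pos (by linarith : t ≤ R - 0), if_pos h]
      field_simp
    · rw [if_neg (by linarith : ¬ t ≤ R - 0), if_pos (Or.inl (by linarith : R + 0 < t)),
        if_neg (not_le.mpr h)]
      ring
  simp_rw [hprof]
  rcases le_total r R with h | h
  · have : ∫ t in (0:ℝ)..r, (if t ≤ R then 2 * π * t else 0) = ∫ t in (0:ℝ)..r, 2 * π * t := by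
      refine intervalIntegral.integral_congr fun t ht => ?_
      rw [uIcc_of_le hr] at ht
      rw [if_pos (le_trans ht.2 h)]
    rw [this, intervalIntegral.integral_const_mul, integral_id]
    rw [min_eq_left h]
    ring
  · have hint : ∀ a b : ℝ, IntervalIntegrable (fun t => if t ≤ R then 2 * π * t else 0)
        volume a b := by
      intro a b
      have : (fun t : ℝ => if t ≤ R then 2 * π * t else 0)
          = fun t => π * R ^ 2 * profile R 0 t := by
        ext t; rw [hprof t]
      rw [this]
      exact (profile_intervalIntegrable hR 0 a b).const_mul _
    rw [← intervalIntegral.integral_add_adjacent_intervals (hint 0 R) (hint R r)]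
    have e1 : ∫ t in (0:ℝ)..R, (if t ≤ R then 2 * π * t else 0) = π * R ^ 2 := by
      have : ∫ t in (0:ℝ)..R, (if t ≤ R then 2 * π * t else 0) = ∫ t in (0:ℝ)..R, 2 * π * t := by
        refine intervalIntegral.integral_congr fun t ht => ?_
        rw [uIcc_of_le hR.le] at ht
        rw [if_pos ht.2]
      rw [this, intervalIntegral.integral_const_mul, integral_id]
      ring
    have e2 : ∫ t in R..r, (if t ≤ R then 2 * π * t else 0) = 0 := by
      have : ∫ t in R..r, (if t ≤ R then 2 * π * t else 0) = ∫ t in R..r, (0:ℝ) := by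
        refine intervalIntegral.integral_congr_ae (MeasureTheory.ae_of_all _ fun t ht => ?_)
        rw [uIoc_of_le h] at ht
        rw [if_neg (not_le.mpr ht.1)]
      rw [this, intervalIntegral.integral_zero]
    rw [e1, e2, min_eq_right h]
    ring


lemma vol_inter_complex {R : ℝ} (hR : 0 < R) {d : ℝ} (hd : 0 ≤ d) {r : ℝ} (hr : 0 ≤ r) :
    (volume (Metric.ball (0:ℂ) r ∩ Metric.ball ((d:ℂ)) R)).toReal
      = ∫ t in (0:ℝ)..r, π * R ^ 2 * profile R d t := by
  rcases eq_or_lt_of_le hd with hd0 | hd0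
  · rw [← hd0]
    exact vol_inter_complex_zero hR hr
  have hπ : (0:ℝ) < π := Real.pi_pos
  set S := Metric.ball (0:ℂ) r ∩ Metric.ball ((d:ℂ)) R with hSdef
  have hSopen : IsOpen S := Metric.isOpen_ball.inter Metric.isOpen_ball
  have hSm : MeasurableSet S := hSopen.measurableSet
  have hsymm_cont : Continuous fun p : ℝ × ℝ => (Complex.polarCoord.symm p : ℂ) := by
    have : (fun p : ℝ × ℝ => (Complex.polarCoord.symm p : ℂ))
        = fun p : ℝ × ℝ => (p.1 : ℂ) * (Real.cos p.2 + Real.sin p.2 * Complex.I) := by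
      ext p
      rw [Complex.polarCoord_symm_apply]
    rw [this]
    fun_prop
  set F : ℝ × ℝ → ℝ :=
    fun p => p.1 * S.indicator (1 : ℂ → ℝ) (Complex.polarCoord.symm p) with hFdef
  have hFmeas : Measurable F :=
    measurable_fst.mul ((measurable_const.indicator hSm).comp hsymm_cont.measurable)
  classical
  have hind_le : ∀ z : ℂ, S.indicator (1 : ℂ → ℝ) z ≤ 1 := by
    intro z
    by_cases h : z ∈ S <;> simp [h]
  have hind_nonneg : ∀ z : ℂ, 0 ≤ S.indicator (1 : ℂ → ℝ) z := by
    intro z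
    by_cases h : z ∈ S <;> simp [h]
  have hFzero : ∀ p : ℝ × ℝ, 0 < p.1 → r ≤ p.1 → F p = 0 := by
    intro p hp hrp
    have : Complex.polarCoord.symm p ∉ S := by
      intro hmem
      have h1 : ‖Complex.polarCoord.symm p‖ < r := by
        have := hmem.1
        rwa [Metric.mem_ball, Complex.dist_eq, sub_zero] at this
      rw [Complex.norm_polarCoord_symm, abs_of_pos hp] at h1
      linarith
    simp only [hFdef]
    rw [Set.indicator_of_notMem this, mul_zero]
  have hFint : IntegrableOn F (Ioi (0:ℝ) ×ˢ Ioo (-π) π) (volume.prod volume) := by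
    have hsub : Ioo (0:ℝ) r ×ˢ Ioo (-π) π ⊆ Ioi (0:ℝ) ×ˢ Ioo (-π) π :=
      Set.prod_mono Ioo_subset_Ioi_self subset_rfl
    have hcover : Ioi (0:ℝ) ×ˢ Ioo (-π) π
        = (Ioo (0:ℝ) r ×ˢ Ioo (-π) π)
          ∪ ((Ioi (0:ℝ) ×ˢ Ioo (-π) π) \ (Ioo (0:ℝ) r ×ˢ Ioo (-π) π)) :=
      (Set.union_diff_cancel hsub).symm
    rw [hcover]
    apply MeasureTheory.IntegrableOn.union
    · apply Measure.integrableOn_of_bounded (M := r)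
      · rw [Measure.prod_prod, Real.volume_Ioo, Real.volume_Ioo]
        exact ENNReal.mul_ne_top ENNReal.ofReal_ne_top ENNReal.ofReal_ne_top
      · exact hFmeas.aestronglyMeasurable
      · refine MeasureTheory.ae_restrict_of_forall_mem
          ((measurableSet_Ioo.prod measurableSet_Ioo)) fun p hp => ?_
        have hp1 : 0 < p.1 := hp.1.1
        have hp2 : p.1 < r := hp.1.2
        rw [Real.norm_eq_abs, hFdef]
        have : |p.1 * S.indicator (1 : ℂ → ℝ) (Complex.polarCoord.symm p)|
            = p.1 * S.indicator (1 : ℂ → ℝ) (Complex.polarCoord.symm p) := by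
          exact abs_of_nonneg (mul_nonneg hp1.le (hind_nonneg _))
        rw [this]
        calc p.1 * S.indicator (1 : ℂ → ℝ) (Complex.polarCoord.symm p)
            ≤ p.1 * 1 := by
              exact mul_le_mul_of_nonneg_left (hind_le _) hp1.le
          _ ≤ r := by linarith
    · have hms : MeasurableSet ((Ioi (0:ℝ) ×ˢ Ioo (-π) π) \ (Ioo (0:ℝ) r ×ˢ Ioo (-π) π)) :=
        (measurableSet_Ioi.prod measurableSet_Ioo).diff
          (measurableSet_Ioo.prod measurableSet_Ioo)
      have hEq : EqOn F (fun _ => (0:ℝ))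
          ((Ioi (0:ℝ) ×ˢ Ioo (-π) π) \ (Ioo (0:ℝ) r ×ˢ Ioo (-π) π)) := by
        intro p hp
        have hp1 : 0 < p.1 := hp.1.1
        have hrp : r ≤ p.1 := by
          by_contra hcon
          push_neg at hcon
          exact hp.2 ⟨⟨hp1, hcon⟩, hp.1.2⟩
        exact hFzero p hp1 hrp
      exact (MeasureTheory.integrableOn_congr_fun hEq hms).mpr
        (MeasureTheory.integrableOn_zero)
  -- inner integral evaluation
  have hinner : ∀ t ∈ Ioi (0:ℝ), (∫ θ in Ioo (-π) π, F (t, θ))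
      = (Ioo (0:ℝ) r).indicator
          (fun t => t * (2 * Real.arccos ((d ^ 2 + t ^ 2 - R ^ 2) / (2 * d * t)))) t := by
    intro t ht
    have ht0 : (0:ℝ) < t := ht
    set T := {θ : ℝ | Complex.polarCoord.symm (t, θ) ∈ S} with hT
    have hTm : MeasurableSet T := by
      have : Continuous fun θ : ℝ => (Complex.polarCoord.symm (t, θ) : ℂ) :=
        hsymm_cont.comp (continuous_const.prodMk continuous_id)
      exact (hSopen.preimage this).measurableSet
    have hFt : ∀ θ : ℝ, F (t, θ) = t * T.indicator (1 : ℝ → ℝ) θ := by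
      intro θ
      simp only [hFdef]
      by_cases hmem : Complex.polarCoord.symm (t, θ) ∈ S
      · rw [Set.indicator_of_mem hmem, Set.indicator_of_mem (show θ ∈ T from hmem)]
        simp only [Pi.one_apply]
      · rw [Set.indicator_of_notMem hmem, Set.indicator_of_notMem (show θ ∉ T from hmem)]
    simp_rw [hFt, ← smul_eq_mul]
    rw [integral_smul, MeasureTheory.setIntegral_indicator hTm]
    simp only [Pi.one_apply]
    rw [MeasureTheory.setIntegral_const, measureReal_def]
    rcases lt_or_ge t r with htr | htr
    · have hset : Ioo (-π) π ∩ T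
          = Ioo (-(Real.arccos ((d ^ 2 + t ^ 2 - R ^ 2) / (2 * d * t))))
              (Real.arccos ((d ^ 2 + t ^ 2 - R ^ 2) / (2 * d * t))) := by
        rw [← cosSet_eq]
        ext θ
        have := mem_inter_symm (r := r) hR hd0 ht0 θ
        simp only [mem_inter_iff, mem_setOf_eq, hT, hSdef] at this ⊢
        tauto
      rw [hset, Real.volume_Ioo, Set.indicator_of_mem (mem_Ioo.mpr ⟨ht0, htr⟩)]
      rw [ENNReal.toReal_ofReal
        (by nlinarith [Real.arccos_nonneg ((d ^ 2 + t ^ 2 - R ^ 2) / (2 * d * t))] :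
          (0:ℝ) ≤ Real.arccos ((d ^ 2 + t ^ 2 - R ^ 2) / (2 * d * t))
            - -Real.arccos ((d ^ 2 + t ^ 2 - R ^ 2) / (2 * d * t)))]
      simp only [smul_eq_mul, mul_one]
      ring
    · have hset : Ioo (-π) π ∩ T = ∅ := by
        ext θ
        simp only [mem_setOf_eq, hT, hSdef, mem_inter_symm hR hd0 ht0 θ]
        simp only [mem_inter_iff, mem_setOf_eq,
          mem_empty_iff_false, iff_false]
        rintro ⟨-, ⟨h1, -⟩⟩
        rw [Metric.mem_ball, dist_zero_right, Complex.norm_polarCoord_symm, abs_of_pos ht0] at h1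
        linarith
      rw [hset, Set.indicator_of_notMem (fun hmem => absurd hmem.2 (not_lt.mpr htr))]
      simp
  calc (volume S).toReal
      = ∫ z : ℂ, S.indicator (1 : ℂ → ℝ) z := by
        rw [MeasureTheory.integral_indicator_one hSm, measureReal_def]
    _ = ∫ p in polarCoord.target, p.1 • S.indicator (1 : ℂ → ℝ)
          (Complex.polarCoord.symm p) := (Complex.integral_comp_polarCoord_symm _).symm
    _ = ∫ p in Ioi (0:ℝ) ×ˢ Ioo (-π) π, F p ∂(volume.prod volume) := by
        rw [polarCoord_target, ← Measure.volume_eq_prod]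
        rfl
    _ = ∫ t in Ioi (0:ℝ), ∫ θ in Ioo (-π) π, F (t, θ) := MeasureTheory.setIntegral_prod _ hFint
    _ = ∫ t in Ioi (0:ℝ), (Ioo (0:ℝ) r).indicator
          (fun t => t * (2 * Real.arccos ((d ^ 2 + t ^ 2 - R ^ 2) / (2 * d * t)))) t :=
        MeasureTheory.setIntegral_congr_fun measurableSet_Ioi hinner
    _ = ∫ t in Ioo (0:ℝ) r,
          t * (2 * Real.arccos ((d ^ 2 + t ^ 2 - R ^ 2) / (2 * d * t))) := by
        rw [MeasureTheory.setIntegral_indicator measurableSet_Ioo,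
          Set.inter_eq_self_of_subset_right Ioo_subset_Ioi_self]
    _ = ∫ t in Ioo (0:ℝ) r, π * R ^ 2 * profile R d t :=
        MeasureTheory.setIntegral_congr_fun measurableSet_Ioo
          (fun t ht => profile_eval hR hd0 ht.1)
    _ = ∫ t in (0:ℝ)..r, π * R ^ 2 * profile R d t := by
        rw [intervalIntegral.integral_of_le hr, MeasureTheory.integral_Ioc_eq_integral_Ioo]


lemma vol_inter_plane (R r : ℝ) (y : Plane) :
    volume (Metric.ball (0:Plane) r ∩ Metric.ball y R)
      = volume (Metric.ball (0:ℂ) r ∩ Metric.ball ((‖y‖ : ℝ) : ℂ) R) := by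
  obtain ⟨F, hF⟩ : ∃ F : ℂ ≃ₗᵢ[ℝ] Plane, F ((‖y‖ : ℝ) : ℂ) = y := by
    by_cases hy : y = 0
    · refine ⟨Complex.orthonormalBasisOneI.repr, ?_⟩
      subst hy
      rw [norm_zero, Complex.ofReal_zero, map_zero]
    · set e : ℂ ≃ₗᵢ[ℝ] Plane := Complex.orthonormalBasisOneI.repr with he
      set w : ℂ := e.symm y with hw
      have hwnorm : ‖w‖ = ‖y‖ := by
        rw [hw, e.symm.norm_map]
      have hyn : (0:ℝ) < ‖y‖ := norm_pos_iff.mpr hy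
      have hu : (w / (‖y‖:ℂ)) ∈ Metric.sphere (0:ℂ) 1 := by
        rw [mem_sphere_zero_iff_norm, norm_div, hwnorm]
        rw [Complex.norm_real, Real.norm_eq_abs, abs_of_pos hyn]
        field_simp
      refine ⟨(rotation ⟨_, (hu : w / (‖y‖:ℂ) ∈ Submonoid.unitSphere ℂ)⟩).trans e, ?_⟩
      have h1 : ((‖y‖:ℝ):ℂ) ≠ 0 := by
        exact_mod_cast ne_of_gt hyn
      simp only [LinearIsometryEquiv.trans_apply, rotation_apply]
      show e ((w / (‖y‖:ℂ)) * ((‖y‖:ℝ):ℂ)) = y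
      rw [div_mul_cancel₀ _ h1, hw]
      exact e.apply_symm_apply y
  have hmp := F.measurePreserving
  have hmeas : MeasurableSet (Metric.ball (0:Plane) r ∩ Metric.ball y R) :=
    (Metric.isOpen_ball.inter Metric.isOpen_ball).measurableSet
  have hpre : F ⁻¹' (Metric.ball (0:Plane) r ∩ Metric.ball y R)
      = Metric.ball (0:ℂ) r ∩ Metric.ball ((‖y‖ : ℝ) : ℂ) R := by
    ext z
    simp only [Set.mem_preimage, mem_inter_iff, Metric.mem_ball]
    constructor
    · rintro ⟨h1, h2⟩
      constructor
      · rwa [← F.map_zero, F.dist_map] at h1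
      · rwa [← hF, F.dist_map] at h2
    · rintro ⟨h1, h2⟩
      constructor
      · rwa [← F.map_zero, F.dist_map]
      · rwa [← hF, F.dist_map]
  rw [← hmp.measure_preimage hmeas.nullMeasurableSet, hpre]

lemma countN_eq (R : ℝ) (hR : 0 < R) {m : ℕ} (y : Fin m → Plane) {r : ℝ} (hr : 0 ≤ r) :
    countN R y r = ∫ t in (0:ℝ)..r, countN' R y t := by
  have hπ : (0:ℝ) < π := Real.pi_pos
  unfold countN countN'
  rw [intervalIntegral.integral_finset_sum
    (fun l _ => profile_intervalIntegrable hR ‖y l‖ 0 r)]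
  refine Finset.sum_congr rfl fun l _ => ?_
  rw [vol_inter_plane R r (y l), vol_inter_complex hR (norm_nonneg (y l)) hr]
  rw [intervalIntegral.integral_const_mul]
  rw [mul_comm, mul_div_assoc, div_self (by positivity : π * R ^ 2 ≠ 0), mul_one]


lemma countN'_measurable (R : ℝ) {m : ℕ} (y : Fin m → Plane) : Measurable (countN' R y) := by
  unfold countN'
  exact Finset.measurable_sum _ fun l _ => profile_measurable R ‖y l‖

lemma countN'_abs_le {R : ℝ} (hR : 0 < R) {m : ℕ} (y : Fin m → Plane) (t : ℝ) :
    |countN' R y t| ≤ 2 * m * |t| / R ^ 2 := by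
  unfold countN'
  calc |∑ l : Fin m, profile R ‖y l‖ t| ≤ ∑ l : Fin m, |profile R ‖y l‖ t| :=
        Finset.abs_sum_le_sum_abs _ _
    _ ≤ ∑ _l : Fin m, 2 * |t| / R ^ 2 :=
        Finset.sum_le_sum fun l _ => profile_abs_le hR _ t
    _ = 2 * m * |t| / R ^ 2 := by
        rw [Finset.sum_const, Finset.card_univ, Fintype.card_fin, nsmul_eq_mul]
        ring

lemma countN'_nonneg {R : ℝ} (hR : 0 < R) {m : ℕ} (y : Fin m → Plane) {t : ℝ} (ht : 0 ≤ t) :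
    0 ≤ countN' R y t :=
  Finset.sum_nonneg fun l _ => profile_nonneg hR _ ht

lemma countN'_intervalIntegrable {R : ℝ} (hR : 0 < R) {m : ℕ} (y : Fin m → Plane) (a b : ℝ) :
    IntervalIntegrable (countN' R y) volume a b := by
  have hc : Continuous fun t : ℝ => 2 * (m : ℝ) * |t| / R ^ 2 := by continuity
  refine (hc.intervalIntegrable a b).mono_fun
    (countN'_measurable R y).aestronglyMeasurable ?_
  filter_upwards with t
  rw [Real.norm_eq_abs, Real.norm_eq_abs]
  exact (countN'_abs_le hR y t).trans (le_abs_self _)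

/-- Fubini step 1: `∫ₐᵇ h(t)(b-t) dt = ∫ₐᵇ ∫ₐˢ h`. -/
lemma integral_swap_one (h : ℝ → ℝ) (hm : Measurable h) {a b : ℝ} (hab : a ≤ b) {C : ℝ}
    (hC : ∀ t ∈ Ioc a b, |h t| ≤ C) :
    ∫ t in a..b, h t * (b - t) = ∫ s in a..b, (∫ t in a..s, h t) := by
  classical
  set μ := volume.restrict (Ioc a b) with hμ
  haveI : IsFiniteMeasure μ := by
    constructor
    rw [hμ, Measure.restrict_apply_univ, Real.volume_Ioc]
    exact ENNReal.ofReal_lt_top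
  set φ : ℝ × ℝ → ℝ := fun p => if p.1 < p.2 then h p.1 else 0 with hφ
  have hφmeas : Measurable φ :=
    Measurable.ite (measurableSet_lt measurable_fst measurable_snd)
      (hm.comp measurable_fst) measurable_const
  have hφint : Integrable φ (μ.prod μ) := by
    refine (integrable_const (max C 0)).mono' hφmeas.aestronglyMeasurable ?_
    rw [hμ, Measure.prod_restrict]
    refine MeasureTheory.ae_restrict_of_forall_mem
      (measurableSet_Ioc.prod measurableSet_Ioc) fun p hp => ?_
    rw [Real.norm_eq_abs, hφ]
    dsimp only
    split_ifs
    · exact (hC p.1 hp.1).trans (le_max_left _ _)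
    · rw [abs_zero]; exact le_max_right C 0
  have hswap := MeasureTheory.integral_integral_swap
    (f := fun t s => φ (t, s)) (μ := μ) (ν := μ) hφint
  have hL : ∫ t in a..b, h t * (b - t) = ∫ t, (∫ s, φ (t, s) ∂μ) ∂μ := by
    rw [intervalIntegral.integral_of_le hab]
    refine (MeasureTheory.setIntegral_congr_fun measurableSet_Ioc fun t ht => ?_).symm
    have heq : ∀ s : ℝ, φ (t, s) = (Ioi t).indicator (fun _ => h t) s := by
      intro s
      rw [hφ]
      dsimp only
      by_cases hts : t < s
      · rw [if_pos hts, Set.indicator_of_mem (mem_Ioi.mpr hts)]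
      · rw [if_neg hts, Set.indicator_of_notMem (fun hc => hts (mem_Ioi.mp hc))]
    rw [hμ]
    simp_rw [heq]
    rw [MeasureTheory.setIntegral_indicator measurableSet_Ioi]
    have hset : Ioc a b ∩ Ioi t = Ioc t b := by
      ext s
      simp only [mem_inter_iff, mem_Ioc, mem_Ioi]
      constructor
      · rintro ⟨⟨_, h2⟩, h3⟩; exact ⟨h3, h2⟩
      · rintro ⟨h1, h2⟩; exact ⟨⟨lt_trans ht.1 h1, h2⟩, h1⟩
    rw [hset, MeasureTheory.setIntegral_const, measureReal_def, Real.volume_Ioc,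
      ENNReal.toReal_ofReal (by linarith [ht.2] : (0:ℝ) ≤ b - t), smul_eq_mul, mul_comm]
  have hR' : ∫ s, (∫ t, φ (t, s) ∂μ) ∂μ = ∫ s in a..b, (∫ t in a..s, h t) := by
    rw [hμ]
    rw [intervalIntegral.integral_of_le hab]
    refine MeasureTheory.setIntegral_congr_fun measurableSet_Ioc fun s hs => ?_
    have heq : ∀ t : ℝ, φ (t, s) = (Iio s).indicator h t := by
      intro t
      rw [hφ]
      dsimp only
      by_cases hts : t < s
      · rw [if_pos hts, Set.indicator_of_mem (mem_Iio.mpr hts)]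
      · rw [if_neg hts, Set.indicator_of_notMem (fun hc => hts (mem_Iio.mp hc))]
    simp_rw [heq]
    rw [MeasureTheory.setIntegral_indicator measurableSet_Iio]
    have hset : Ioc a b ∩ Iio s = Ioo a s := by
      ext t
      simp only [mem_inter_iff, mem_Ioc, mem_Iio, mem_Ioo]
      constructor
      · rintro ⟨⟨h1, _⟩, h3⟩; exact ⟨h1, h3⟩
      · rintro ⟨h1, h2⟩; exact ⟨⟨h1, le_trans h2.le hs.2⟩, h2⟩
    rw [hset, intervalIntegral.integral_of_le (by linarith [hs.1, hs.2] : a ≤ s), MeasureTheory.integral_Ioc_eq_integral_Ioo]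
  rw [hL, hswap, hR']


/-- Fubini step 2 (mirror): `∫ₐᵇ h(t)(t-a) dt = ∫ₐᵇ ∫ₛᵇ h`. -/
lemma integral_swap_two (h : ℝ → ℝ) (hm : Measurable h)
    (hint : ∀ u v : ℝ, IntervalIntegrable h volume u v) {a b : ℝ} (hab : a ≤ b) {C : ℝ}
    (hC : ∀ t ∈ Ioc a b, |h t| ≤ C) :
    ∫ t in a..b, h t * (t - a) = ∫ s in a..b, (∫ t in s..b, h t) := by
  have hprim_cont : Continuous fun s : ℝ => ∫ t in a..s, h t :=
    intervalIntegral.continuous_primitive hint a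
  have hprim_int : IntervalIntegrable (fun s => ∫ t in a..s, h t) volume a b :=
    hprim_cont.intervalIntegrable a b
  have hmul1 : IntervalIntegrable (fun t => h t * (b - a)) volume a b :=
    (hint a b).mul_const _
  have hmul2 : IntervalIntegrable (fun t => h t * (b - t)) volume a b :=
    (hint a b).mul_continuousOn (by fun_prop : Continuous fun t : ℝ => b - t).continuousOn
  calc ∫ t in a..b, h t * (t - a)
      = ∫ t in a..b, (h t * (b - a) - h t * (b - t)) := by
        refine intervalIntegral.integral_congr fun t _ => ?_
        ring
    _ = (∫ t in a..b, h t * (b - a)) - ∫ t in a..b, h t * (b - t) :=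
        intervalIntegral.integral_sub hmul1 hmul2
    _ = (∫ t in a..b, h t) * (b - a) - ∫ s in a..b, (∫ t in a..s, h t) := by
        rw [intervalIntegral.integral_mul_const, integral_swap_one h hm hab hC]
    _ = ∫ s in a..b, ((∫ t in a..b, h t) - ∫ t in a..s, h t) := by
        rw [intervalIntegral.integral_sub (intervalIntegrable_const) hprim_int,
          intervalIntegral.integral_const, smul_eq_mul, mul_comm]
    _ = ∫ s in a..b, (∫ t in s..b, h t) := by
        refine intervalIntegral.integral_congr fun s _ => ?_
        exact intervalIntegral.integral_interval_sub_left (hint a b) (hint a s)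

set_option maxHeartbeats 1600000 in
/-- **General integral bound** (Lemma 4.8).  Suppose `R/2 ≤ r₁ < r₂`, `q ∈ ℤ`,
`ρ(r) = |Φ̂(r) - 2q|²` on `(r₁, r₂)` and `ρ(r₀) = 0` for some `r₀ ∈ (r₁, r₂)`.  Then, with
`δ(r) = min{r - r₁, r₂ - r}`:
`∫_{r₁}^{r₂} ρ(r)/r dr ≥ (2α²/(r₂(r₂-r₁))) (∫_{r₁}^{r₂} 𝒩'(r) δ(r) dr)²`. -/
theorem general_integral_bound
    (R α : ℝ) (hR : 0 < R) (m : ℕ) (y : Fin m → Plane)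
    (r₁ r₂ : ℝ) (hr₁ : R / 2 ≤ r₁) (h₁₂ : r₁ < r₂) (q : ℤ)
    (hq : ∀ r ∈ Set.Ioo r₁ r₂,
      rhoFun α R y r = (α * (1 + 2 * countN R y r) - 2 * q) ^ 2)
    (r₀ : ℝ) (hr₀ : r₀ ∈ Set.Ioo r₁ r₂) (hzero : rhoFun α R y r₀ = 0) :
    2 * α ^ 2 / (r₂ * (r₂ - r₁))
        * (∫ r in r₁..r₂, countN' R y r * min (r - r₁) (r₂ - r)) ^ 2
      ≤ ∫ r in r₁..r₂, rhoFun α R y r / r := by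
  have hr₁pos : 0 < r₁ := lt_of_lt_of_le (by positivity) hr₁
  have hr₂pos : 0 < r₂ := hr₁pos.trans h₁₂
  have h01 : (0:ℝ) ≤ r₁ := hr₁pos.le
  have hpos : 0 < r₂ - r₁ := by linarith
  obtain ⟨hr₀1, hr₀2⟩ := hr₀
  have hr₀pos : 0 < r₀ := hr₁pos.trans hr₀1
  set N : ℝ → ℝ := countN R y with hN
  set D : ℝ → ℝ := countN' R y with hD
  set g : ℝ → ℝ := fun r => α * (1 + 2 * N r) - 2 * (q:ℝ) with hg
  set C₀ : ℝ := 2 * m * r₂ / R ^ 2 with hC₀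
  have hDbd : ∀ u v : ℝ, r₁ ≤ u → v ≤ r₂ → ∀ t ∈ Ioc u v, |D t| ≤ C₀ := by
    intro u v hu hv t ht
    have ht1 : 0 < t := lt_of_le_of_lt (le_trans h01 hu) ht.1
    have htr : |t| ≤ r₂ := by
      rw [abs_of_pos ht1]; linarith [ht.2]
    calc |D t| ≤ 2 * m * |t| / R ^ 2 := countN'_abs_le hR y t
      _ ≤ C₀ := by rw [hC₀]; gcongr
  have hDmeas := countN'_measurable R y
  have hDint : ∀ u v : ℝ, IntervalIntegrable D volume u v := countN'_intervalIntegrable hR y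
  have hNeq : ∀ u : ℝ, 0 ≤ u → N u = ∫ t in (0:ℝ)..u, D t := by
    intro u hu
    rw [hN, hD]
    exact countN_eq R hR y hu
  have hNd : ∀ {u v : ℝ}, 0 ≤ u → 0 ≤ v → N v - N u = ∫ t in u..v, D t := by
    intro u v hu hv
    rw [hNeq v hv, hNeq u hu,
      intervalIntegral.integral_interval_sub_left (hDint 0 v) (hDint 0 u)]
  have hg0 : g r₀ = 0 := by
    have h1 := hq r₀ ⟨hr₀1, hr₀2⟩
    rw [hzero] at h1
    have h2 : g r₀ ^ 2 = 0 := by rw [hg]; exact h1.symm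
    exact pow_eq_zero_iff two_ne_zero |>.mp h2
  have hNcont : ContinuousOn N (Icc r₁ r₂) := by
    have hprim : Continuous fun u : ℝ => ∫ t in (0:ℝ)..u, D t :=
      intervalIntegral.continuous_primitive hDint 0
    exact hprim.continuousOn.congr fun u hu => hNeq u (le_trans h01 hu.1)
  have hgcont : ContinuousOn g (Icc r₁ r₂) := by
    rw [hg]
    exact (continuousOn_const.mul
      (continuousOn_const.add (continuousOn_const.mul hNcont))).sub continuousOn_const
  -- integrability of D times bounded weights
  have hDk_int : ∀ (k : ℝ → ℝ), Measurable k → (∀ t ∈ Ioc r₁ r₂, |k t| ≤ r₂ - r₁) →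
      ∀ u v : ℝ, r₁ ≤ u → v ≤ r₂ → u ≤ v →
      IntervalIntegrable (fun t => D t * k t) volume u v := by
    intro k hk hkb u v hu hv huv
    refine (intervalIntegrable_const (c := C₀ * (r₂ - r₁))).mono_fun
      ((hDmeas.mul hk).aestronglyMeasurable) ?_
    refine MeasureTheory.ae_restrict_of_forall_mem measurableSet_uIoc fun t ht => ?_
    rw [uIoc_of_le huv] at ht
    have ht' : t ∈ Ioc r₁ r₂ := ⟨lt_of_le_of_lt hu ht.1, le_trans ht.2 hv⟩
    dsimp only
    rw [Real.norm_eq_abs, Real.norm_eq_abs, abs_mul]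
    have hC₀nn : 0 ≤ C₀ := by rw [hC₀]; positivity
    exact (mul_le_mul (hDbd u v hu hv t ht) (hkb t ht') (abs_nonneg _) hC₀nn).trans
      (le_abs_self _)
  set wf : ℝ → ℝ := fun r => if r ≤ r₀ then r - r₁ else r₂ - r with hwf
  have hwf_meas : Measurable wf := by
    refine Measurable.ite (measurableSet_le measurable_id measurable_const) ?_ ?_ <;> fun_prop
  have hmin_meas : Measurable fun r : ℝ => min (r - r₁) (r₂ - r) := by fun_prop
  have hminbd : ∀ t ∈ Ioc r₁ r₂, |min (t - r₁) (r₂ - t)| ≤ r₂ - r₁ := by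
    intro t ht
    rw [abs_le]
    constructor
    · have := min_le_right (t - r₁) (r₂ - t)
      have h2 := le_min (by linarith [ht.1.le] : (0:ℝ) ≤ t - r₁) (by linarith [ht.2] : (0:ℝ) ≤ r₂ - t)
      linarith
    · exact le_trans (min_le_left _ _) (by linarith [ht.2])
  have hwfbd : ∀ t ∈ Ioc r₁ r₂, |wf t| ≤ r₂ - r₁ := by
    intro t ht
    rw [hwf]
    dsimp only
    split_ifs
    · rw [abs_of_nonneg (by linarith [ht.1.le])]; linarith [ht.2]
    · rw [abs_of_nonneg (by linarith [ht.2])]; linarith [ht.1.le]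
  have intJ := hDk_int _ hmin_meas hminbd r₁ r₂ le_rfl le_rfl h₁₂.le
  have intW := hDk_int _ hwf_meas hwfbd r₁ r₂ le_rfl le_rfl h₁₂.le
  have intW1 := hDk_int _ hwf_meas hwfbd r₁ r₀ le_rfl hr₀2.le hr₀1.le
  have intW2 := hDk_int _ hwf_meas hwfbd r₀ r₂ hr₀1.le le_rfl hr₀2.le
  set Jmin := ∫ r in r₁..r₂, D r * min (r - r₁) (r₂ - r) with hJmin
  have hJ_le_W : Jmin ≤ ∫ r in r₁..r₂, D r * wf r := by
    rw [hJmin]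
    refine intervalIntegral.integral_mono_on h₁₂.le intJ intW fun r hr => ?_
    have hDnn : 0 ≤ D r := countN'_nonneg hR y (le_trans h01 hr.1)
    refine mul_le_mul_of_nonneg_left ?_ hDnn
    rw [hwf]
    dsimp only
    split_ifs
    · exact min_le_left _ _
    · exact min_le_right _ _
  have hWsplit : ∫ r in r₁..r₂, D r * wf r
      = (∫ r in r₁..r₀, D r * wf r) + ∫ r in r₀..r₂, D r * wf r :=
    (intervalIntegral.integral_add_adjacent_intervals intW1 intW2).symm
  have hW1 : ∫ r in r₁..r₀, D r * wf r = ∫ t in r₁..r₀, D t * (t - r₁) := by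
    refine intervalIntegral.integral_congr fun t ht => ?_
    rw [uIcc_of_le hr₀1.le] at ht
    rw [hwf]
    dsimp only
    rw [if_pos ht.2]
  have hW2 : ∫ r in r₀..r₂, D r * wf r = ∫ t in r₀..r₂, D t * (r₂ - t) := by
    refine intervalIntegral.integral_congr_ae (MeasureTheory.ae_of_all _ fun t ht => ?_)
    rw [uIoc_of_le hr₀2.le] at ht
    rw [hwf]
    dsimp only
    rw [if_neg (not_le.mpr ht.1)]
  have hswap1 : ∫ t in r₁..r₀, D t * (t - r₁) = ∫ s in r₁..r₀, (∫ t in s..r₀, D t) :=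
    integral_swap_two D hDmeas hDint hr₀1.le (hDbd r₁ r₀ le_rfl hr₀2.le)
  have hswap2 : ∫ t in r₀..r₂, D t * (r₂ - t) = ∫ s in r₀..r₂, (∫ t in r₀..s, D t) :=
    integral_swap_one D hDmeas hr₀2.le (hDbd r₀ r₂ hr₀1.le le_rfl)
  -- |g| in terms of integrals of D
  have hG1 : ∫ s in r₁..r₀, |g s| = 2 * |α| * ∫ s in r₁..r₀, (∫ t in s..r₀, D t) := by
    rw [← intervalIntegral.integral_const_mul]
    refine intervalIntegral.integral_congr fun s hs => ?_
    rw [uIcc_of_le hr₀1.le] at hs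
    have hs0 : (0:ℝ) ≤ s := le_trans h01 hs.1
    have h1 : N r₀ - N s = ∫ t in s..r₀, D t := hNd hs0 hr₀pos.le
    have h2 : 0 ≤ ∫ t in s..r₀, D t :=
      intervalIntegral.integral_nonneg hs.2 fun t ht => countN'_nonneg hR y (le_trans hs0 ht.1)
    have h3 : g s = -(2 * α * ∫ t in s..r₀, D t) := by
      have h4 : g r₀ - g s = 2 * α * (N r₀ - N s) := by rw [hg]; ring
      rw [hg0, h1] at h4
      linarith
    rw [h3, abs_neg, abs_mul, abs_mul, abs_two, abs_of_nonneg h2]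
  have hG2 : ∫ s in r₀..r₂, |g s| = 2 * |α| * ∫ s in r₀..r₂, (∫ t in r₀..s, D t) := by
    rw [← intervalIntegral.integral_const_mul]
    refine intervalIntegral.integral_congr fun s hs => ?_
    rw [uIcc_of_le hr₀2.le] at hs
    have h1 : N s - N r₀ = ∫ t in r₀..s, D t := hNd hr₀pos.le (le_trans hr₀pos.le hs.1)
    have h2 : 0 ≤ ∫ t in r₀..s, D t :=
      intervalIntegral.integral_nonneg hs.1 fun t ht => countN'_nonneg hR y
        (le_trans hr₀pos.le ht.1)
    have h3 : g s = 2 * α * ∫ t in r₀..s, D t := by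
      have h4 : g s - g r₀ = 2 * α * (N s - N r₀) := by rw [hg]; ring
      rw [hg0, h1] at h4
      linarith
    rw [h3, abs_mul, abs_mul, abs_two, abs_of_nonneg h2]
  have hgabs_int : ∀ u v : ℝ, r₁ ≤ u → v ≤ r₂ → u ≤ v →
      IntervalIntegrable (fun s => |g s|) volume u v := by
    intro u v hu hv huv
    refine ContinuousOn.intervalIntegrable ?_
    rw [uIcc_of_le huv]
    exact (hgcont.mono (Icc_subset_Icc hu hv)).abs
  set G := ∫ s in r₁..r₂, |g s| with hGdef
  have hGsplit : G = (∫ s in r₁..r₀, |g s|) + ∫ s in r₀..r₂, |g s| :=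
    (intervalIntegral.integral_add_adjacent_intervals
      (hgabs_int r₁ r₀ le_rfl hr₀2.le hr₀1.le) (hgabs_int r₀ r₂ hr₀1.le le_rfl hr₀2.le)).symm
  have hGeq : G = 2 * |α| * ∫ r in r₁..r₂, D r * wf r := by
    rw [hGsplit, hG1, hG2, ← hswap1, ← hswap2, ← hW1, ← hW2, hWsplit]
    ring
  have hJnn : 0 ≤ Jmin := by
    rw [hJmin]
    refine intervalIntegral.integral_nonneg h₁₂.le fun r hr => ?_
    exact mul_nonneg (countN'_nonneg hR y (le_trans h01 hr.1))
      (le_min (by linarith [hr.1]) (by linarith [hr.2]))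
  have hGle : 2 * |α| * Jmin ≤ G := by
    rw [hGeq]
    exact mul_le_mul_of_nonneg_left hJ_le_W (by positivity)
  -- Cauchy-Schwarz
  set Q := ∫ s in r₁..r₂, g s ^ 2 with hQdef
  have hgsq_int : IntervalIntegrable (fun s => g s ^ 2) volume r₁ r₂ := by
    refine ContinuousOn.intervalIntegrable ?_
    rw [uIcc_of_le h₁₂.le]
    exact hgcont.pow 2
  have habs_int := hgabs_int r₁ r₂ le_rfl le_rfl h₁₂.le
  have hCS : G ^ 2 ≤ (r₂ - r₁) * Q := by
    set c := G / (r₂ - r₁) with hc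
    have hexp : ∫ s in r₁..r₂, (|g s| - c) ^ 2 = Q - 2 * c * G + (r₂ - r₁) * c ^ 2 := by
      have hptw : ∀ s : ℝ, (|g s| - c) ^ 2 = g s ^ 2 - 2 * c * |g s| + c ^ 2 := by
        intro s
        rw [sub_sq, sq_abs]
        ring
      simp_rw [hptw]
      rw [intervalIntegral.integral_add (hgsq_int.sub ((habs_int.const_mul (2 * c))))
          intervalIntegrable_const,
        intervalIntegral.integral_sub hgsq_int (habs_int.const_mul (2 * c)),
        intervalIntegral.integral_const_mul, intervalIntegral.integral_const, smul_eq_mul]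
    have h0 : 0 ≤ ∫ s in r₁..r₂, (|g s| - c) ^ 2 :=
      intervalIntegral.integral_nonneg h₁₂.le fun s _ => sq_nonneg _
    rw [hexp] at h0
    have hcc : c * (r₂ - r₁) = G := div_mul_cancel₀ _ (ne_of_gt hpos)
    nlinarith [mul_nonneg hpos.le h0, hcc]
  -- comparison with weighted integral
  set P := ∫ s in r₁..r₂, g s ^ 2 / s with hPdef
  have hPcont : ContinuousOn (fun s => g s ^ 2 / s) (Icc r₁ r₂) :=
    (hgcont.pow 2).div continuousOn_id fun s hs => ne_of_gt (lt_of_lt_of_le hr₁pos hs.1)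
  have hPint : IntervalIntegrable (fun s => g s ^ 2 / s) volume r₁ r₂ := by
    refine ContinuousOn.intervalIntegrable ?_
    rw [uIcc_of_le h₁₂.le]
    exact hPcont
  have hPnn : 0 ≤ P := by
    rw [hPdef]
    refine intervalIntegral.integral_nonneg h₁₂.le fun s hs => ?_
    exact div_nonneg (sq_nonneg _) (le_trans h01 hs.1)
  have hQP : Q ≤ r₂ * P := by
    have h1 : ∫ s in r₁..r₂, g s ^ 2 / r₂ ≤ P := by
      rw [hPdef]
      refine intervalIntegral.integral_mono_on h₁₂.le (hgsq_int.div_const _) hPint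
        fun s hs => ?_
      have hs0 : 0 < s := lt_of_lt_of_le hr₁pos hs.1
      gcongr
      exact hs.2
    rw [intervalIntegral.integral_div] at h1
    rw [hQdef]
    exact ((div_le_iff₀ hr₂pos).mp h1).trans_eq (mul_comm _ _)
  -- identify the RHS
  have hRho : ∫ r in r₁..r₂, rhoFun α R y r / r = P := by
    rw [hPdef]
    refine intervalIntegral.integral_congr_ae ?_
    have hsing : ∀ᵐ x : ℝ, x ≠ r₂ := by
      have h1 : volume ({r₂} : Set ℝ) = 0 := Real.volume_singleton
      rw [MeasureTheory.ae_iff]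
      simpa using h1
    filter_upwards [hsing] with x hx hmem
    rw [uIoc_of_le h₁₂.le] at hmem
    rw [hq x ⟨hmem.1, lt_of_le_of_ne hmem.2 hx⟩, hg]
  rw [hRho]
  rw [div_mul_eq_mul_div, div_le_iff₀ (by positivity)]
  have h4 : (2 * |α| * Jmin) ^ 2 ≤ G ^ 2 := pow_le_pow_left₀ (by positivity) hGle 2
  have h5 : (2 * |α| * Jmin) ^ 2 = 4 * α ^ 2 * Jmin ^ 2 := by
    rw [mul_pow, mul_pow, sq_abs]
    ring
  nlinarith [hCS, mul_le_mul_of_nonneg_left hQP hpos.le, sq_nonneg (α * Jmin), hPnn]
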